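/- arXiv:1109.5193 — 3 statements merged into one kernel-verified Lean document; each statement's English description precedes it below -/
import Mathlib

section
/- Let Y_1, ..., Y_n be independent real random variables, f a multilinear polynomial of degree at most q given by f(y) = Σ_{h ∈ H} w_h ∏_{v ∈ h} y_v with H a finite family of distinct subsets of [n] each of size at most q. For r ≥ 0 define μ_r = max over subsets S of [n] with |S| = r of Σ_{h ∈ H, h ⊇ S} |w_h| ∏_{v ∈ h\S} E[|Y_v|]. Then the centered expansion f(Y) = E[f(Y)] + Σ_{h' nonempty} w'_{h'} ∏_{v ∈ h'} (Y_v - E[Y_v]) holds with w'_{h'} = Σ_{h ∈ H, h ⊇ h'} w_h ∏_{v ∈ h\h'} E[Y_v], and moreover μ_r(w', Y) ≤ 2^q · μ_r(w, Y) for every 0 ≤ r ≤ q. -/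
open MeasureTheory ProbabilityTheory

lemma aux_prod_int {Ω : Type*} [MeasurableSpace Ω] (μ : Measure Ω) [IsProbabilityMeasure μ]
    {n : ℕ} (Y : Fin n → Ω → ℝ) (hmeas : ∀ v, Measurable (Y v))
    (hindep : iIndepFun Y μ) (hint : ∀ v, Integrable (Y v) μ)
    (s : Finset (Fin n)) :
    Integrable (fun ω => ∏ v ∈ s, Y v ω) μ ∧
      (∫ ω, ∏ v ∈ s, Y v ω ∂μ) = ∏ v ∈ s, ∫ ω, Y v ω ∂μ := by
  induction s using Finset.cons_induction with
  | empty => simp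
  | cons i s hi ih =>
    have hip : IndepFun (Y i) (fun ω => ∏ j ∈ s, Y j ω) μ := by
      have := (hindep.indepFun_finsetProd_of_notMem hmeas hi).symm
      simpa [Finset.prod_fn] using this
    have hInt : Integrable (fun ω => Y i ω * ∏ j ∈ s, Y j ω) μ :=
      hip.integrable_mul (hint i) ih.1
    constructor
    · have he : (fun ω => ∏ v ∈ Finset.cons i s hi, Y v ω)
          = fun ω => Y i ω * ∏ j ∈ s, Y j ω := by
        funext ω; rw [Finset.prod_cons]
      rw [he]; exact hInt
    · rw [Finset.prod_cons]
      have := hip.integral_mul_eq_mul_integral (hint i).aestronglyMeasurable ih.1.aestronglyMeasurable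
      simp only [Finset.prod_cons]
      calc (∫ ω, Y i ω * ∏ j ∈ s, Y j ω ∂μ)
          = (∫ ω, Y i ω ∂μ) * ∫ ω, ∏ j ∈ s, Y j ω ∂μ := this
        _ = (∫ ω, Y i ω ∂μ) * ∏ j ∈ s, ∫ ω, Y j ω ∂μ := by rw [ih.2]

lemma aux_expand (n q : ℕ) (H : Finset (Finset (Fin n))) (hcard : ∀ h ∈ H, h.card ≤ q)
    (w : Finset (Fin n) → ℝ) (w' : Finset (Fin n) → ℝ) (m : Fin n → ℝ) (Yω : Fin n → ℝ)
    (hw' : ∀ h' : Finset (Fin n),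
      w' h' = ∑ h ∈ H.filter (fun h => h' ⊆ h), w h * ∏ v ∈ h \ h', m v) :
    ∑ h ∈ H, w h * ∏ v ∈ h, Yω v =
      (∑ h ∈ H, w h * ∏ v ∈ h, m v) +
        ∑ h' ∈ Finset.univ.powerset.filter
            (fun h' : Finset (Fin n) => h'.Nonempty ∧ h'.card ≤ q),
          w' h' * ∏ v ∈ h', (Yω v - m v) := by
  classical
  set P : Finset (Finset (Fin n)) := Finset.univ.powerset with hP
  have key : ∑ h ∈ H, w h * ∏ v ∈ h, Yω v
      = ∑ h' ∈ P, w' h' * ∏ v ∈ h', (Yω v - m v) := by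
    have step1 : ∀ h ∈ H, w h * ∏ v ∈ h, Yω v
        = ∑ h' ∈ P, if h' ⊆ h then w h * ((∏ v ∈ h', (Yω v - m v)) * ∏ v ∈ h \ h', m v) else 0 := by
      intro h _
      have hprod : ∏ v ∈ h, Yω v
          = ∑ h' ∈ h.powerset, (∏ v ∈ h', (Yω v - m v)) * ∏ v ∈ h \ h', m v := by
        have : ∀ v ∈ h, Yω v = (Yω v - m v) + m v := fun v _ => by ring
        rw [Finset.prod_congr rfl this, Finset.prod_add]
      have hps : h.powerset = P.filter (fun h' => h' ⊆ h) := by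
        ext t; simp [hP]
      rw [hprod, hps, Finset.sum_filter, Finset.mul_sum]
      exact Finset.sum_congr rfl fun h' _ => by split <;> simp
    rw [Finset.sum_congr rfl step1, Finset.sum_comm]
    refine Finset.sum_congr rfl fun h' _ => ?_
    rw [← Finset.sum_filter, hw', Finset.sum_mul]
    exact Finset.sum_congr rfl fun h _ => by ring
  have hsplit : P.filter (fun h' : Finset (Fin n) => h'.card ≤ q)
      = insert ∅ (P.filter (fun h' : Finset (Fin n) => h'.Nonempty ∧ h'.card ≤ q)) := by
    ext t
    simp only [Finset.mem_filter, Finset.mem_insert, hP, Finset.mem_powerset,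
      Finset.subset_univ, true_and, Finset.nonempty_iff_ne_empty]
    rcases eq_or_ne t ∅ with h | h
    · subst h; simp
    · simp [h]
  have hcut : ∑ h' ∈ P, w' h' * ∏ v ∈ h', (Yω v - m v)
      = ∑ h' ∈ P.filter (fun h' : Finset (Fin n) => h'.card ≤ q),
          w' h' * ∏ v ∈ h', (Yω v - m v) := by
    symm
    apply Finset.sum_subset (Finset.filter_subset _ _)
    intro h' hmem hnot
    have hq : ¬ h'.card ≤ q := by
      simp only [Finset.mem_filter] at hnot; tauto
    have : H.filter (fun h => h' ⊆ h) = ∅ := by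
      apply Finset.filter_eq_empty_iff.mpr
      intro h hh hsub
      exact hq (le_trans (Finset.card_le_card hsub) (hcard h hh))
    rw [hw', this]
    simp
  have hempty : w' ∅ = ∑ h ∈ H, w h * ∏ v ∈ h, m v := by
    rw [hw']
    rw [Finset.filter_true_of_mem (fun h _ => Finset.empty_subset h)]
    simp
  rw [key, hcut, hsplit, Finset.sum_insert (by simp), hempty]
  simp

lemma aux_core (n q r : ℕ) (H : Finset (Finset (Fin n))) (hcard : ∀ h ∈ H, h.card ≤ q)
    (w : Finset (Fin n) → ℝ) (w' : Finset (Fin n) → ℝ) (E : Fin n → ℝ) (hE : ∀ v, 0 ≤ E v)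
    (hw'' : ∀ h' : Finset (Fin n),
      |w' h'| ≤ ∑ h ∈ H.filter (fun h => h' ⊆ h), |w h| * ∏ v ∈ h \ h', E v)
    (S : Finset (Fin n)) :
    ∑ h' ∈ (Finset.univ.powerset.filter (fun h' : Finset (Fin n) => h'.card ≤ q)).filter
        (fun h' => S ⊆ h'), |w' h'| * ∏ v ∈ h' \ S, E v ≤
      2 ^ q * ∑ h ∈ H.filter (fun h => S ⊆ h), |w h| * ∏ v ∈ h \ S, E v := by
  classical
  set A : Finset (Finset (Fin n)) :=
    (Finset.univ.powerset.filter (fun h' : Finset (Fin n) => h'.card ≤ q)).filter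
      (fun h' => S ⊆ h') with hA
  have step1 : ∑ h' ∈ A, |w' h'| * ∏ v ∈ h' \ S, E v
      ≤ ∑ h' ∈ A, ∑ h ∈ H.filter (fun h => h' ⊆ h), |w h| * ∏ v ∈ h \ S, E v := by
    refine Finset.sum_le_sum fun h' hh' => ?_
    have hSh' : S ⊆ h' := by simp only [hA, Finset.mem_filter] at hh'; exact hh'.2
    have hprodnn : 0 ≤ ∏ v ∈ h' \ S, E v := Finset.prod_nonneg fun v _ => hE v
    calc |w' h'| * ∏ v ∈ h' \ S, E v
        ≤ (∑ h ∈ H.filter (fun h => h' ⊆ h), |w h| * ∏ v ∈ h \ h', E v) * ∏ v ∈ h' \ S, E v :=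
          mul_le_mul_of_nonneg_right (hw'' h') hprodnn
      _ = ∑ h ∈ H.filter (fun h => h' ⊆ h), |w h| * ∏ v ∈ h \ S, E v := by
          rw [Finset.sum_mul]
          refine Finset.sum_congr rfl fun h hh => ?_
          have hh'h : h' ⊆ h := (Finset.mem_filter.mp hh).2
          have hun : h \ S = (h \ h') ∪ (h' \ S) := by
            ext v
            simp only [Finset.mem_sdiff, Finset.mem_union]
            have h1 : v ∈ S → v ∈ h' := fun hv => hSh' hv
            have h2 : v ∈ h' → v ∈ h := fun hv => hh'h hv
            tauto
          have hdisj : Disjoint (h \ h') (h' \ S) := by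
            rw [Finset.disjoint_left]
            intro a ha hb
            exact (Finset.mem_sdiff.mp ha).2 (Finset.mem_sdiff.mp hb).1
          rw [hun, Finset.prod_union hdisj]
          ring
  have step2 : ∑ h' ∈ A, ∑ h ∈ H.filter (fun h => h' ⊆ h), |w h| * ∏ v ∈ h \ S, E v
      = ∑ h ∈ H, ∑ h' ∈ A.filter (fun h' => h' ⊆ h), |w h| * ∏ v ∈ h \ S, E v := by
    simp only [Finset.sum_filter]
    exact Finset.sum_comm
  have step3 : ∀ h ∈ H, ∑ h' ∈ A.filter (fun h' => h' ⊆ h), |w h| * ∏ v ∈ h \ S, E v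
      ≤ 2 ^ q * if S ⊆ h then |w h| * ∏ v ∈ h \ S, E v else 0 := by
    intro h hh
    have hc : 0 ≤ |w h| * ∏ v ∈ h \ S, E v :=
      mul_nonneg (abs_nonneg _) (Finset.prod_nonneg fun v _ => hE v)
    by_cases hSh : S ⊆ h
    · rw [if_pos hSh, Finset.sum_const, nsmul_eq_mul]
      refine mul_le_mul_of_nonneg_right ?_ hc
      have hsub : A.filter (fun h' => h' ⊆ h) ⊆ h.powerset := by
        intro t ht
        exact Finset.mem_powerset.mpr (Finset.mem_filter.mp ht).2
      calc ((A.filter (fun h' => h' ⊆ h)).card : ℝ) ≤ (h.powerset.card : ℝ) := by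
            exact_mod_cast Finset.card_le_card hsub
        _ = (2 : ℝ) ^ h.card := by rw [Finset.card_powerset]; push_cast; ring
        _ ≤ 2 ^ q := by
            apply pow_le_pow_right₀ (by norm_num) (hcard h hh)
    · rw [if_neg hSh]
      have : A.filter (fun h' => h' ⊆ h) = ∅ := by
        apply Finset.filter_eq_empty_iff.mpr
        intro h' hh' hsub
        have hSh' : S ⊆ h' := by simp only [hA, Finset.mem_filter] at hh'; exact hh'.2
        exact hSh (hSh'.trans hsub)
      simp [this]
  calc ∑ h' ∈ A, |w' h'| * ∏ v ∈ h' \ S, E v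
      ≤ ∑ h ∈ H, ∑ h' ∈ A.filter (fun h' => h' ⊆ h), |w h| * ∏ v ∈ h \ S, E v := by
        rw [← step2]; exact step1
    _ ≤ ∑ h ∈ H, 2 ^ q * if S ⊆ h then |w h| * ∏ v ∈ h \ S, E v else 0 :=
        Finset.sum_le_sum step3
    _ = 2 ^ q * ∑ h ∈ H.filter (fun h => S ⊆ h), |w h| * ∏ v ∈ h \ S, E v := by
        rw [← Finset.mul_sum, Finset.sum_filter]

/-- The smoothness parameter `μ_r`: the supremum over vertex sets `S` of size `r` of
`Σ_{h ⊇ S} |w_h| ∏_{v ∈ h \ S} E[|Y_v|]`. -/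
noncomputable def muPar (n : ℕ) (H : Finset (Finset (Fin n))) (w : Finset (Fin n) → ℝ)
    (EabsY : Fin n → ℝ) (r : ℕ) : ℝ :=
  sSup {x : ℝ | ∃ S : Finset (Fin n), S.card = r ∧
    x = ∑ h ∈ H.filter (fun h => S ⊆ h), |w h| * ∏ v ∈ h \ S, EabsY v}

lemma muPar_bdd (n : ℕ) (H : Finset (Finset (Fin n))) (w : Finset (Fin n) → ℝ)
    (E : Fin n → ℝ) (r : ℕ) :
    BddAbove {x : ℝ | ∃ S : Finset (Fin n), S.card = r ∧
      x = ∑ h ∈ H.filter (fun h => S ⊆ h), |w h| * ∏ v ∈ h \ S, E v} := by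
  have he : {x : ℝ | ∃ S : Finset (Fin n), S.card = r ∧
      x = ∑ h ∈ H.filter (fun h => S ⊆ h), |w h| * ∏ v ∈ h \ S, E v}
      = (fun S : Finset (Fin n) => ∑ h ∈ H.filter (fun h => S ⊆ h), |w h| * ∏ v ∈ h \ S, E v) ''
        {S | S.card = r} := by
    ext x
    simp only [Set.mem_setOf_eq, Set.mem_image, eq_comm]
  rw [he]
  exact ((Set.toFinite _).image _).bddAbove

lemma le_muPar (n : ℕ) (H : Finset (Finset (Fin n))) (w : Finset (Fin n) → ℝ)
    (E : Fin n → ℝ) (r : ℕ) (S : Finset (Fin n)) (hS : S.card = r) :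
    ∑ h ∈ H.filter (fun h => S ⊆ h), |w h| * ∏ v ∈ h \ S, E v ≤ muPar n H w E r :=
  le_csSup (muPar_bdd n H w E r) ⟨S, hS, rfl⟩

lemma muPar_nonneg (n : ℕ) (H : Finset (Finset (Fin n))) (w : Finset (Fin n) → ℝ)
    (E : Fin n → ℝ) (hE : ∀ v, 0 ≤ E v) (r : ℕ) : 0 ≤ muPar n H w E r := by
  apply Real.sSup_nonneg
  rintro x ⟨S, hS, rfl⟩
  exact Finset.sum_nonneg fun h _ => mul_nonneg (abs_nonneg _)
    (Finset.prod_nonneg fun v _ => hE v)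

/-- Centered expansion of a multilinear polynomial, and the bound
`μ_r(w', Y) ≤ 2^q · μ_r(w, Y)` for the centered coefficients. -/
theorem stmt_17 {Ω : Type*} [MeasurableSpace Ω] (μ : Measure Ω) [IsProbabilityMeasure μ]
    (n q : ℕ) (Y : Fin n → Ω → ℝ)
    (hmeas : ∀ v, Measurable (Y v))
    (hindep : iIndepFun Y μ)
    (hint : ∀ v, Integrable (Y v) μ)
    (H : Finset (Finset (Fin n))) (hcard : ∀ h ∈ H, h.card ≤ q)
    (w : Finset (Fin n) → ℝ)
    (w' : Finset (Fin n) → ℝ)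
    (hw' : ∀ h' : Finset (Fin n),
      w' h' = ∑ h ∈ H.filter (fun h => h' ⊆ h), w h * ∏ v ∈ h \ h', ∫ ω, Y v ω ∂μ) :
    (∀ ω, ∑ h ∈ H, w h * ∏ v ∈ h, Y v ω =
      (∫ ω', ∑ h ∈ H, w h * ∏ v ∈ h, Y v ω' ∂μ) +
        ∑ h' ∈ Finset.univ.powerset.filter
            (fun h' : Finset (Fin n) => h'.Nonempty ∧ h'.card ≤ q),
          w' h' * ∏ v ∈ h', (Y v ω - ∫ ω', Y v ω' ∂μ)) ∧
    (∀ r : ℕ, r ≤ q →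
      muPar n (Finset.univ.powerset.filter (fun h' : Finset (Fin n) => h'.card ≤ q)) w'
          (fun v => ∫ ω, |Y v ω| ∂μ) r ≤
        2 ^ q * muPar n H w (fun v => ∫ ω, |Y v ω| ∂μ) r) := by
  classical
  set m : Fin n → ℝ := fun v => ∫ ω, Y v ω ∂μ with hm
  set E : Fin n → ℝ := fun v => ∫ ω, |Y v ω| ∂μ with hEdef
  have hE : ∀ v, 0 ≤ E v := fun v => integral_nonneg fun ω => abs_nonneg _
  have hEf : ∫ ω', ∑ h ∈ H, w h * ∏ v ∈ h, Y v ω' ∂μ = ∑ h ∈ H, w h * ∏ v ∈ h, m v := by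
    rw [integral_finset_sum H (fun h _ =>
      ((aux_prod_int μ Y hmeas hindep hint h).1.const_mul (w h)))]
    refine Finset.sum_congr rfl fun h _ => ?_
    rw [integral_const_mul, (aux_prod_int μ Y hmeas hindep hint h).2]
  constructor
  · intro ω
    rw [hEf]
    exact aux_expand n q H hcard w w' m (fun v => Y v ω) hw'
  · intro r hr
    have hw'' : ∀ h' : Finset (Fin n),
        |w' h'| ≤ ∑ h ∈ H.filter (fun h => h' ⊆ h), |w h| * ∏ v ∈ h \ h', E v := by
      intro h'
      rw [hw' h']
      calc |∑ h ∈ H.filter (fun h => h' ⊆ h), w h * ∏ v ∈ h \ h', m v|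
          ≤ ∑ h ∈ H.filter (fun h => h' ⊆ h), |w h * ∏ v ∈ h \ h', m v| :=
            Finset.abs_sum_le_sum_abs _ _
        _ ≤ ∑ h ∈ H.filter (fun h => h' ⊆ h), |w h| * ∏ v ∈ h \ h', E v := by
            refine Finset.sum_le_sum fun h _ => ?_
            rw [abs_mul, Finset.abs_prod]
            refine mul_le_mul_of_nonneg_left ?_ (abs_nonneg _)
            refine Finset.prod_le_prod (fun v _ => abs_nonneg _) fun v _ => ?_
            simpa [Real.norm_eq_abs] using norm_integral_le_integral_norm (Y v) (μ := μ)
    apply Real.sSup_le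
    · rintro x ⟨S, hS, rfl⟩
      calc ∑ h' ∈ (Finset.univ.powerset.filter
              (fun h' : Finset (Fin n) => h'.card ≤ q)).filter (fun h' => S ⊆ h'),
            |w' h'| * ∏ v ∈ h' \ S, E v
          ≤ 2 ^ q * ∑ h ∈ H.filter (fun h => S ⊆ h), |w h| * ∏ v ∈ h \ S, E v :=
            aux_core n q r H hcard w w' E hE hw'' S
        _ ≤ 2 ^ q * muPar n H w E r :=
            mul_le_mul_of_nonneg_left (le_muPar n H w E r S hS) (by positivity)
    · exact mul_nonneg (by positivity) (muPar_nonneg n H w E hE r)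
end

section
/- Let Y_1, ..., Y_n be independent central moment bounded random variables with common parameter L > 0, and let f be a multilinear polynomial of degree at most q with coefficients w_h over a finite family of subsets of [n]. Then Var[f(Y)] ≤ 2q·4^q · max_{r ∈ [q]} ( μ_0(f,Y) · μ_r(f,Y) · 4^r · L^r ), where μ_r(f,Y) = max_{S ⊆ [n], |S| = r} Σ_{h ⊇ S} |w_h| ∏_{v ∈ h\S} E[|Y_v|]. -/
open MeasureTheory ProbabilityTheory

lemma aux_prod {Ω : Type*} [MeasurableSpace Ω] (μ : Measure Ω) [IsProbabilityMeasure μ]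
    {n : ℕ} (X : Fin n → Ω → ℝ) (hmeas : ∀ v, Measurable (X v))
    (hindep : iIndepFun X μ)
    (hint : ∀ v, Integrable (X v) μ) (s : Finset (Fin n)) :
    Integrable (fun ω => ∏ v ∈ s, X v ω) μ ∧
      ∫ ω, ∏ v ∈ s, X v ω ∂μ = ∏ v ∈ s, ∫ ω, X v ω ∂μ := by
  classical
  induction s using Finset.induction_on with
  | empty => simp
  | @insert a s ha ih =>
    have hif : IndepFun (∏ j ∈ s, X j) (X a) μ :=
      hindep.indepFun_finsetProd_of_notMem hmeas ha
    have hps : (∏ j ∈ s, X j) = fun ω => ∏ v ∈ s, X v ω := by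
      funext ω; simp
    have hIs : Integrable (∏ j ∈ s, X j) μ := by rw [hps]; exact ih.1
    have hmul : Integrable ((∏ j ∈ s, X j) * X a) μ := hif.integrable_mul hIs (hint a)
    constructor
    · apply hmul.congr
      filter_upwards with ω
      simp [Finset.prod_insert ha, mul_comm]
    · have h1 : ∫ ω, ∏ v ∈ insert a s, X v ω ∂μ = ∫ ω, ((∏ j ∈ s, X j) * X a) ω ∂μ := by
        apply integral_congr_ae; filter_upwards with ω
        simp [Finset.prod_insert ha, mul_comm]
      rw [h1, hif.integral_mul_eq_mul_integral hIs.1 (hint a).1, Finset.prod_insert ha, hps, ih.2]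
      ring

lemma aux_prod' {Ω : Type*} [MeasurableSpace Ω] (μ : Measure Ω) [IsProbabilityMeasure μ]
    {n : ℕ} (Y : Fin n → Ω → ℝ) (hmeas : ∀ v, Measurable (Y v))
    (hindep : iIndepFun Y μ)
    (g : Fin n → ℝ → ℝ) (hg : ∀ v, Measurable (g v))
    (hint : ∀ v, Integrable (fun ω => g v (Y v ω)) μ) (s : Finset (Fin n)) :
    Integrable (fun ω => ∏ v ∈ s, g v (Y v ω)) μ ∧
      ∫ ω, ∏ v ∈ s, g v (Y v ω) ∂μ = ∏ v ∈ s, ∫ ω, g v (Y v ω) ∂μ :=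
  aux_prod μ (fun v ω => g v (Y v ω)) (fun v => (hg v).comp (hmeas v))
    (hindep.comp g hg) hint s

lemma prod_split {n : ℕ} (h h' : Finset (Fin n)) (f : Fin n → ℝ) :
    (∏ v ∈ h, f v) * ∏ v ∈ h', f v =
      (∏ v ∈ h ∩ h', (f v)^2) * ∏ v ∈ (h ∪ h') \ (h ∩ h'), f v := by
  classical
  have h1 : (∏ v ∈ h \ (h ∩ h'), f v) * ∏ v ∈ h ∩ h', f v = ∏ v ∈ h, f v :=
    Finset.prod_sdiff Finset.inter_subset_left
  have h2 : (∏ v ∈ h' \ (h ∩ h'), f v) * ∏ v ∈ h ∩ h', f v = ∏ v ∈ h', f v :=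
    Finset.prod_sdiff Finset.inter_subset_right
  have h3 : (h ∪ h') \ (h ∩ h') = h \ (h ∩ h') ∪ h' \ (h ∩ h') :=
    Finset.union_sdiff_distrib _ _ _
  have h4 : Disjoint (h \ (h ∩ h')) (h' \ (h ∩ h')) := by
    rw [Finset.sdiff_inter_self_left, Finset.sdiff_inter_self_right]
    exact disjoint_sdiff_sdiff
  rw [h3, Finset.prod_union h4, ← h1, ← h2, Finset.prod_pow]
  ring

lemma cov_le {Ω : Type*} [MeasurableSpace Ω] (μ : Measure Ω) [IsProbabilityMeasure μ]
    {n : ℕ} (Y : Fin n → Ω → ℝ)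
    (hmeas : ∀ v, Measurable (Y v))
    (hindep : iIndepFun Y μ)
    (hmom : ∀ v, ∀ k : ℕ, Integrable (fun ω => |Y v ω| ^ k) μ)
    (L : ℝ) (hL : 0 < L)
    (hcmb : ∀ v, ∀ i : ℕ, 1 ≤ i →
      (∫ ω, |Y v ω - ∫ ω', Y v ω' ∂μ| ^ i ∂μ) ≤
        i * L * ∫ ω, |Y v ω - ∫ ω', Y v ω' ∂μ| ^ (i - 1) ∂μ)
    (w : Finset (Fin n) → ℝ) (h h' : Finset (Fin n)) :
    w h * w h' * ((∫ ω, (∏ v ∈ h, Y v ω) * ∏ v ∈ h', Y v ω ∂μ) -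
        (∫ ω, ∏ v ∈ h, Y v ω ∂μ) * ∫ ω, ∏ v ∈ h', Y v ω ∂μ) ≤
      ∑ S ∈ (h ∩ h').powerset.erase ∅, (4*L)^S.card *
        (|w h| * ∏ v ∈ h, ∫ ω, |Y v ω| ∂μ) *
        (|w h'| * ∏ v ∈ h' \ S, ∫ ω, |Y v ω| ∂μ) := by
  classical
  set m : Fin n → ℝ := fun v => ∫ ω, Y v ω ∂μ with hm
  set mb : Fin n → ℝ := fun v => ∫ ω, |Y v ω| ∂μ with hmbdef
  set s2 : Fin n → ℝ := fun v => ∫ ω, (Y v ω)^2 ∂μ with hs2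
  set T := h ∩ h' with hT
  set U := h ∪ h' with hU
  -- basic integrability
  have hint1 : ∀ v, Integrable (Y v) μ := by
    intro v
    refine (hmom v 1).mono' (hmeas v).aestronglyMeasurable ?_
    filter_upwards with ω; simp [Real.norm_eq_abs]
  have hint2 : ∀ v, Integrable (fun ω => (Y v ω)^2) μ := by
    intro v
    refine (hmom v 2).mono' ?_ ?_
    · exact ((hmeas v).pow_const 2).aestronglyMeasurable
    · filter_upwards with ω; simp [Real.norm_eq_abs, abs_pow]
  have hmb0 : ∀ v, 0 ≤ mb v := fun v => integral_nonneg (fun ω => abs_nonneg _)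
  have habs : ∀ v, |m v| ≤ mb v := by
    intro v
    simpa [Real.norm_eq_abs] using norm_integral_le_integral_norm (μ := μ) (Y v)
  -- variance of single coordinate
  set sg : Fin n → ℝ := fun v => s2 v - (m v)^2 with hsgdef
  have hsg_eq : ∀ v, sg v = ∫ ω, (Y v ω - m v)^2 ∂μ := by
    intro v
    have hfe : (fun ω => (Y v ω - m v)^2)
        = fun ω => ((Y v ω)^2 - (2 * m v) * Y v ω) + (m v)^2 := by
      funext ω; ring
    have i1 : Integrable (fun ω => (Y v ω)^2 - (2 * m v) * Y v ω) μ :=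
      (hint2 v).sub ((hint1 v).const_mul _)
    have e : (∫ ω, ((Y v ω)^2 - (2 * m v) * Y v ω) + (m v)^2 ∂μ)
        = (∫ ω, ((Y v ω)^2 - (2 * m v) * Y v ω) ∂μ) + ∫ _, (m v)^2 ∂μ :=
      integral_add i1 (integrable_const _)
    have e2 : (∫ ω, ((Y v ω)^2 - (2 * m v) * Y v ω) ∂μ)
        = (∫ ω, (Y v ω)^2 ∂μ) - ∫ ω, (2 * m v) * Y v ω ∂μ :=
      integral_sub (hint2 v) ((hint1 v).const_mul _)
    have e3 : (∫ ω, (2 * m v) * Y v ω ∂μ) = (2 * m v) * ∫ ω, Y v ω ∂μ :=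
      integral_const_mul _ _
    rw [hfe, e, e2, e3, integral_const]
    simp only [measure_univ, probReal_univ, smul_eq_mul, one_mul, hsgdef, hs2, hm]
    ring
  have hsg_nonneg : ∀ v, 0 ≤ sg v := by
    intro v; rw [hsg_eq v]; exact integral_nonneg (fun ω => sq_nonneg _)
  have hsg_le : ∀ v, sg v ≤ 4 * L * mb v := by
    intro v
    have h2 := hcmb v 2 (by norm_num)
    have e1 : (fun ω => |Y v ω - ∫ ω', Y v ω' ∂μ| ^ 2) = fun ω => (Y v ω - m v)^2 := by
      funext ω; rw [sq_abs]
    have e2 : (fun ω => |Y v ω - ∫ ω', Y v ω' ∂μ| ^ (2-1)) = fun ω => |Y v ω - m v| := by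
      funext ω; simp [hm]
    rw [e1, e2] at h2
    have hZint : Integrable (fun ω => |Y v ω - m v|) μ := ((hint1 v).sub (integrable_const _)).abs
    have h3 : (∫ ω, |Y v ω - m v| ∂μ) ≤ mb v + |m v| := by
      have : (∫ ω, |Y v ω - m v| ∂μ) ≤ ∫ ω, |Y v ω| + |m v| ∂μ := by
        refine integral_mono hZint ((hint1 v).abs.add (integrable_const _)) ?_
        intro ω; exact abs_sub _ _
      rwa [integral_add ((hint1 v).abs) (integrable_const _), integral_const,
        probReal_univ, smul_eq_mul, one_mul] at this
    have h4 : (∫ ω, |Y v ω - m v| ∂μ) ≤ 2 * mb v := by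
      refine h3.trans ?_
      have := habs v; linarith
    calc sg v = ∫ ω, (Y v ω - m v)^2 ∂μ := hsg_eq v
      _ ≤ (2:ℕ) * L * ∫ ω, |Y v ω - m v| ∂μ := h2
      _ ≤ 2 * L * (2 * mb v) := by
          push_cast
          have : (0:ℝ) ≤ 2 * L := by linarith
          exact mul_le_mul_of_nonneg_left h4 this
      _ = 4 * L * mb v := by ring
  -- first moments of products
  have hEX : ∀ s : Finset (Fin n), ∫ ω, ∏ v ∈ s, Y v ω ∂μ = ∏ v ∈ s, m v := by
    intro s
    exact (aux_prod' μ Y hmeas hindep (fun _ x => x) (fun _ => measurable_id)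
      (fun v => hint1 v) s).2
  -- second (mixed) moment of the pair product
  have hEXX : ∫ ω, (∏ v ∈ h, Y v ω) * ∏ v ∈ h', Y v ω ∂μ
      = (∏ v ∈ T, s2 v) * ∏ v ∈ U \ T, m v := by
    set g : Fin n → ℝ → ℝ := fun v x => if v ∈ T then x^2 else x with hg
    have hgm : ∀ v, Measurable (g v) := by
      intro v; by_cases hv : v ∈ T
      · have hgv : g v = fun x : ℝ => x^2 := by funext x; simp [hg, hv]
        rw [hgv]; exact measurable_id.pow_const 2
      · have hgv : g v = fun x : ℝ => x := by funext x; simp [hg, hv]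
        rw [hgv]; exact measurable_id
    have hgint : ∀ v, Integrable (fun ω => g v (Y v ω)) μ := by
      intro v; by_cases hv : v ∈ T
      · have hgv : ∀ x : ℝ, g v x = x^2 := by intro x; simp [hg, hv]
        simp only [hgv]; exact hint2 v
      · have hgv : ∀ x : ℝ, g v x = x := by intro x; simp [hg, hv]
        simp only [hgv]; exact hint1 v
    have hpoint : ∀ ω, (∏ v ∈ h, Y v ω) * ∏ v ∈ h', Y v ω = ∏ v ∈ U, g v (Y v ω) := by
      intro ω
      rw [prod_split h h' (fun v => Y v ω)]
      have : (∏ v ∈ U, g v (Y v ω))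
          = (∏ v ∈ U \ T, g v (Y v ω)) * ∏ v ∈ T, g v (Y v ω) :=
        (Finset.prod_sdiff (Finset.inter_subset_union)).symm
      rw [this]
      have e1 : ∏ v ∈ T, g v (Y v ω) = ∏ v ∈ T, (Y v ω)^2 :=
        Finset.prod_congr rfl (fun v hv => by simp [hg, hv])
      have e2 : ∏ v ∈ U \ T, g v (Y v ω) = ∏ v ∈ U \ T, Y v ω :=
        Finset.prod_congr rfl (fun v hv => by
          simp only [Finset.mem_sdiff] at hv
          simp [hg, hv.2])
      rw [e1, e2]; ring
    have h1 : ∫ ω, (∏ v ∈ h, Y v ω) * ∏ v ∈ h', Y v ω ∂μ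
        = ∫ ω, ∏ v ∈ U, g v (Y v ω) ∂μ := by
      apply integral_congr_ae; filter_upwards with ω; exact hpoint ω
    rw [h1, (aux_prod' μ Y hmeas hindep g hgm hgint U).2]
    have : (∏ v ∈ U, ∫ ω, g v (Y v ω) ∂μ)
        = (∏ v ∈ U \ T, ∫ ω, g v (Y v ω) ∂μ) * ∏ v ∈ T, ∫ ω, g v (Y v ω) ∂μ :=
      (Finset.prod_sdiff (Finset.inter_subset_union)).symm
    rw [this]
    have e1 : ∏ v ∈ T, ∫ ω, g v (Y v ω) ∂μ = ∏ v ∈ T, s2 v :=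
      Finset.prod_congr rfl (fun v hv => by simp [hg, hv, hs2])
    have e2 : ∏ v ∈ U \ T, ∫ ω, g v (Y v ω) ∂μ = ∏ v ∈ U \ T, m v :=
      Finset.prod_congr rfl (fun v hv => by
        simp only [Finset.mem_sdiff] at hv
        simp [hg, hv.2, hm])
    rw [e1, e2]; ring
  -- covariance identity
  have hcov : (∫ ω, (∏ v ∈ h, Y v ω) * ∏ v ∈ h', Y v ω ∂μ) -
      (∫ ω, ∏ v ∈ h, Y v ω ∂μ) * ∫ ω, ∏ v ∈ h', Y v ω ∂μ
      = (∏ v ∈ U \ T, m v) *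
          ∑ S ∈ T.powerset.erase ∅, (∏ v ∈ S, sg v) * ∏ v ∈ T \ S, (m v)^2 := by
    rw [hEXX, hEX, hEX, prod_split h h' m]
    have hexp : ∏ v ∈ T, s2 v
        = ∑ S ∈ T.powerset, (∏ v ∈ S, sg v) * ∏ v ∈ T \ S, (m v)^2 := by
      have : ∏ v ∈ T, s2 v = ∏ v ∈ T, (sg v + (m v)^2) :=
        Finset.prod_congr rfl (fun v _ => by simp [hsgdef])
      rw [this, Finset.prod_add]
    have hmem : ∅ ∈ T.powerset := Finset.mem_powerset.mpr (Finset.empty_subset T)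
    rw [hexp, ← Finset.add_sum_erase _ _ hmem]
    simp only [Finset.prod_empty, Finset.sdiff_empty, one_mul]
    ring
  rw [hcov]
  -- now the estimate
  have key : ∀ S ∈ T.powerset.erase ∅,
      |w h| * |w h'| * ((∏ v ∈ U \ T, mb v) * ((∏ v ∈ S, 4 * L * mb v) * ∏ v ∈ T \ S, (mb v)^2))
      = (4*L)^S.card * (|w h| * ∏ v ∈ h, mb v) * (|w h'| * ∏ v ∈ h' \ S, mb v) := by
    intro S hS
    rw [Finset.mem_erase, Finset.mem_powerset] at hS
    obtain ⟨-, hST⟩ := hS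
    have hTh : T ⊆ h := Finset.inter_subset_left
    have hTh' : T ⊆ h' := Finset.inter_subset_right
    have hSh' : S ⊆ h' := hST.trans hTh'
    have e0 : ∏ v ∈ S, 4 * L * mb v = (4*L)^S.card * ∏ v ∈ S, mb v := by
      rw [Finset.prod_mul_distrib, Finset.prod_const]
    have e1 : (∏ v ∈ h \ T, mb v) * ∏ v ∈ T, mb v = ∏ v ∈ h, mb v :=
      Finset.prod_sdiff hTh
    have e2 : (∏ v ∈ T \ S, mb v) * ∏ v ∈ S, mb v = ∏ v ∈ T, mb v :=
      Finset.prod_sdiff hST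
    have e3 : (h' \ S) \ (T \ S) = h' \ T := by
      ext a
      simp only [Finset.mem_sdiff, not_and, not_not]
      constructor
      · rintro ⟨⟨ha1, ha2⟩, ha3⟩
        exact ⟨ha1, fun haT => ha2 (ha3 haT)⟩
      · rintro ⟨ha1, ha2⟩
        exact ⟨⟨ha1, fun haS => ha2 (hST haS)⟩, fun haT => absurd haT ha2⟩
    have hTS : T \ S ⊆ h' \ S := Finset.sdiff_subset_sdiff hTh' (le_refl S)
    have e4 : (∏ v ∈ (h' \ S) \ (T \ S), mb v) * ∏ v ∈ T \ S, mb v = ∏ v ∈ h' \ S, mb v :=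
      Finset.prod_sdiff hTS
    have e5 : (h ∪ h') \ T = h \ T ∪ h' \ T := Finset.union_sdiff_distrib _ _ _
    have e6 : Disjoint (h \ T) (h' \ T) := by
      rw [hT, Finset.sdiff_inter_self_left, Finset.sdiff_inter_self_right]
      exact disjoint_sdiff_sdiff
    have e7 : ∏ v ∈ U \ T, mb v = (∏ v ∈ h \ T, mb v) * ∏ v ∈ h' \ T, mb v := by
      rw [hU, e5, Finset.prod_union e6]
    rw [e0, e7, ← e1, ← e2, ← e4, e3, Finset.prod_pow]
    ring
  calc w h * w h' * ((∏ v ∈ U \ T, m v) *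
        ∑ S ∈ T.powerset.erase ∅, (∏ v ∈ S, sg v) * ∏ v ∈ T \ S, (m v)^2)
      ≤ |w h| * |w h'| * ((∏ v ∈ U \ T, mb v) *
        ∑ S ∈ T.powerset.erase ∅, (∏ v ∈ S, 4 * L * mb v) * ∏ v ∈ T \ S, (mb v)^2) := by
        have hle1 : w h * w h' * ((∏ v ∈ U \ T, m v) *
            ∑ S ∈ T.powerset.erase ∅, (∏ v ∈ S, sg v) * ∏ v ∈ T \ S, (m v)^2)
            ≤ |w h| * |w h'| * (|∏ v ∈ U \ T, m v| *
            |∑ S ∈ T.powerset.erase ∅, (∏ v ∈ S, sg v) * ∏ v ∈ T \ S, (m v)^2|) := by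
          calc w h * w h' * ((∏ v ∈ U \ T, m v) * _)
              ≤ |w h * w h' * ((∏ v ∈ U \ T, m v) *
                ∑ S ∈ T.powerset.erase ∅, (∏ v ∈ S, sg v) * ∏ v ∈ T \ S, (m v)^2)| :=
                le_abs_self _
            _ = |w h| * |w h'| * (|∏ v ∈ U \ T, m v| *
                |∑ S ∈ T.powerset.erase ∅, (∏ v ∈ S, sg v) * ∏ v ∈ T \ S, (m v)^2|) := by
                rw [abs_mul, abs_mul, abs_mul]
        refine hle1.trans ?_
        have hb1 : |∏ v ∈ U \ T, m v| ≤ ∏ v ∈ U \ T, mb v := by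
          rw [Finset.abs_prod]
          exact Finset.prod_le_prod (fun v _ => abs_nonneg _) (fun v _ => habs v)
        have hb2 : |∑ S ∈ T.powerset.erase ∅, (∏ v ∈ S, sg v) * ∏ v ∈ T \ S, (m v)^2|
            ≤ ∑ S ∈ T.powerset.erase ∅, (∏ v ∈ S, 4 * L * mb v) * ∏ v ∈ T \ S, (mb v)^2 := by
          refine (Finset.abs_sum_le_sum_abs _ _).trans ?_
          refine Finset.sum_le_sum (fun S hS => ?_)
          rw [abs_mul]
          have hp1 : |∏ v ∈ S, sg v| ≤ ∏ v ∈ S, 4 * L * mb v := by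
            rw [Finset.abs_prod]
            refine Finset.prod_le_prod (fun v _ => abs_nonneg _) (fun v _ => ?_)
            rw [abs_of_nonneg (hsg_nonneg v)]
            exact hsg_le v
          have hp2 : |∏ v ∈ T \ S, (m v)^2| ≤ ∏ v ∈ T \ S, (mb v)^2 := by
            rw [Finset.abs_prod]
            refine Finset.prod_le_prod (fun v _ => abs_nonneg _) (fun v _ => ?_)
            rw [abs_of_nonneg (sq_nonneg _)]
            have h5 : |m v|^2 ≤ (mb v)^2 := pow_le_pow_left₀ (abs_nonneg _) (habs v) 2
            rwa [sq_abs] at h5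
          exact mul_le_mul hp1 hp2 (abs_nonneg _) (Finset.prod_nonneg (fun v _ => by
            have := hmb0 v; positivity))
        have hw : (0:ℝ) ≤ |w h| * |w h'| := by positivity
        refine mul_le_mul_of_nonneg_left ?_ hw
        refine mul_le_mul hb1 hb2 (abs_nonneg _) ?_
        exact Finset.prod_nonneg (fun v _ => hmb0 v)
    _ = ∑ S ∈ T.powerset.erase ∅, (4*L)^S.card *
        (|w h| * ∏ v ∈ h, mb v) * (|w h'| * ∏ v ∈ h' \ S, mb v) := by
        rw [Finset.mul_sum, Finset.mul_sum]
        exact Finset.sum_congr rfl key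

section main
variable {Ω : Type*} [MeasurableSpace Ω] {μ : Measure Ω} [IsProbabilityMeasure μ]
  {n : ℕ} {Y : Fin n → Ω → ℝ}

-- integrability of a pair product, and Memℒp 2 of a single product
lemma pair_int (hmeas : ∀ v, Measurable (Y v))
    (hindep : iIndepFun Y μ)
    (hmom : ∀ v, ∀ k : ℕ, Integrable (fun ω => |Y v ω| ^ k) μ)
    (h h' : Finset (Fin n)) :
    Integrable (fun ω => (∏ v ∈ h, Y v ω) * ∏ v ∈ h', Y v ω) μ := by
  classical
  have hint1 : ∀ v, Integrable (Y v) μ := by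
    intro v
    refine (hmom v 1).mono' (hmeas v).aestronglyMeasurable ?_
    filter_upwards with ω; simp [Real.norm_eq_abs]
  have hint2 : ∀ v, Integrable (fun ω => (Y v ω)^2) μ := by
    intro v
    refine (hmom v 2).mono' ((hmeas v).pow_const 2).aestronglyMeasurable ?_
    filter_upwards with ω; simp [Real.norm_eq_abs, abs_pow]
  set T := h ∩ h' with hT
  set U := h ∪ h' with hU
  set g : Fin n → ℝ → ℝ := fun v x => if v ∈ T then x^2 else x with hg
  have hgm : ∀ v, Measurable (g v) := by
    intro v; by_cases hv : v ∈ T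
    · have hgv : g v = fun x : ℝ => x^2 := by funext x; simp [hg, hv]
      rw [hgv]; exact measurable_id.pow_const 2
    · have hgv : g v = fun x : ℝ => x := by funext x; simp [hg, hv]
      rw [hgv]; exact measurable_id
  have hgint : ∀ v, Integrable (fun ω => g v (Y v ω)) μ := by
    intro v; by_cases hv : v ∈ T
    · have hgv : ∀ x : ℝ, g v x = x^2 := by intro x; simp [hg, hv]
      simp only [hgv]; exact hint2 v
    · have hgv : ∀ x : ℝ, g v x = x := by intro x; simp [hg, hv]
      simp only [hgv]; exact hint1 v
  refine ((aux_prod' μ Y hmeas hindep g hgm hgint U).1).congr ?_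
  filter_upwards with ω
  rw [prod_split h h' (fun v => Y v ω)]
  have hsplit : (∏ v ∈ U, g v (Y v ω))
      = (∏ v ∈ U \ T, g v (Y v ω)) * ∏ v ∈ T, g v (Y v ω) :=
    (Finset.prod_sdiff (Finset.inter_subset_union)).symm
  rw [hsplit]
  have e1 : ∏ v ∈ T, g v (Y v ω) = ∏ v ∈ T, (Y v ω)^2 :=
    Finset.prod_congr rfl (fun v hv => by simp [hg, hv])
  have e2 : ∏ v ∈ U \ T, g v (Y v ω) = ∏ v ∈ U \ T, Y v ω :=
    Finset.prod_congr rfl (fun v hv => by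
      simp only [Finset.mem_sdiff] at hv; simp [hg, hv.2])
  rw [e1, e2]; ring

lemma prod_memL2 (hmeas : ∀ v, Measurable (Y v))
    (hindep : iIndepFun Y μ)
    (hmom : ∀ v, ∀ k : ℕ, Integrable (fun ω => |Y v ω| ^ k) μ)
    (h : Finset (Fin n)) :
    MemLp (fun ω => ∏ v ∈ h, Y v ω) 2 μ := by
  have hsm : AEStronglyMeasurable (fun ω => ∏ v ∈ h, Y v ω) μ :=
    (Finset.measurable_prod h (fun v _ => hmeas v)).aestronglyMeasurable
  rw [memLp_two_iff_integrable_sq hsm]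
  have := pair_int hmeas hindep hmom h h
  refine this.congr ?_
  filter_upwards with ω; ring

end main

/-- For independent central moment bounded `Y_v` with common parameter `L > 0` and a
multilinear polynomial `f` of degree at most `q`,
`Var[f(Y)] ≤ 2q·4^q · max_{r ∈ [q]} (μ₀·μ_r·4^r·L^r)`. -/
theorem stmt_18 {Ω : Type*} [MeasurableSpace Ω] (μ : Measure Ω) [IsProbabilityMeasure μ]
    (n q : ℕ) (hq : 1 ≤ q) (Y : Fin n → Ω → ℝ)
    (hmeas : ∀ v, Measurable (Y v))
    (hindep : iIndepFun Y μ)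
    (hmom : ∀ v, ∀ k : ℕ, Integrable (fun ω => |Y v ω| ^ k) μ)
    (L : ℝ) (hL : 0 < L)
    (hcmb : ∀ v, ∀ i : ℕ, 1 ≤ i →
      (∫ ω, |Y v ω - ∫ ω', Y v ω' ∂μ| ^ i ∂μ) ≤
        i * L * ∫ ω, |Y v ω - ∫ ω', Y v ω' ∂μ| ^ (i - 1) ∂μ)
    (H : Finset (Finset (Fin n))) (hcard : ∀ h ∈ H, h.card ≤ q)
    (w : Finset (Fin n) → ℝ) :
    variance (fun ω => ∑ h ∈ H, w h * ∏ v ∈ h, Y v ω) μ ≤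
      2 * q * 4 ^ q * (Finset.Icc 1 q).sup' (Finset.nonempty_Icc.mpr hq)
        (fun r => muPar n H w (fun v => ∫ ω, |Y v ω| ∂μ) 0 *
          muPar n H w (fun v => ∫ ω, |Y v ω| ∂μ) r * 4 ^ r * L ^ r) := by
  classical
  set mb : Fin n → ℝ := fun v => ∫ ω, |Y v ω| ∂μ with hmb
  have hmb0 : ∀ v, 0 ≤ mb v := fun v => integral_nonneg (fun ω => abs_nonneg _)
  set X : Finset (Fin n) → Ω → ℝ := fun h ω => ∏ v ∈ h, Y v ω with hXdef
  set EX : Finset (Fin n) → ℝ := fun h => ∫ ω, X h ω ∂μ with hEXdef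
  have hXL2 : ∀ h, MemLp (X h) 2 μ := fun h => prod_memL2 hmeas hindep hmom h
  have hfL2 : MemLp (fun ω => ∑ h ∈ H, w h * ∏ v ∈ h, Y v ω) 2 μ :=
    memLp_finsetSum H (fun h _ => (hXL2 h).const_mul (w h))
  have hXint : ∀ h, Integrable (X h) μ := fun h => (hXL2 h).integrable (by norm_num)
  have hpairint : ∀ h h', Integrable (fun ω => X h ω * X h' ω) μ :=
    pair_int hmeas hindep hmom
  -- variance expansion
  have hvar : variance (fun ω => ∑ h ∈ H, w h * ∏ v ∈ h, Y v ω) μ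
      = ∑ h ∈ H, ∑ h' ∈ H,
          w h * w h' * ((∫ ω, X h ω * X h' ω ∂μ) - EX h * EX h') := by
    rw [variance_eq_sub hfL2]
    have hsq : (fun ω => ∑ h ∈ H, w h * ∏ v ∈ h, Y v ω) ^ 2
        = fun ω => ∑ h ∈ H, ∑ h' ∈ H, (w h * w h') * (X h ω * X h' ω) := by
      funext ω
      rw [Pi.pow_apply, sq, Finset.sum_mul_sum]
      exact Finset.sum_congr rfl (fun h _ => Finset.sum_congr rfl (fun h' _ => by
        simp only [hXdef]; ring))
    have hLHS : μ[(fun ω => ∑ h ∈ H, w h * ∏ v ∈ h, Y v ω) ^ 2]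
        = ∑ h ∈ H, ∑ h' ∈ H, (w h * w h') * ∫ ω, X h ω * X h' ω ∂μ := by
      rw [hsq, integral_finset_sum H (fun h _ =>
        integrable_finset_sum H (fun h' _ => (hpairint h h').const_mul _))]
      refine Finset.sum_congr rfl (fun h _ => ?_)
      rw [integral_finset_sum H (fun h' _ => (hpairint h h').const_mul _)]
      exact Finset.sum_congr rfl (fun h' _ => integral_const_mul _ _)
    have hE : μ[fun ω => ∑ h ∈ H, w h * ∏ v ∈ h, Y v ω] = ∑ h ∈ H, w h * EX h := by
      rw [integral_finset_sum H (fun h _ => (hXint h).const_mul _)]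
      exact Finset.sum_congr rfl (fun h _ => integral_const_mul _ _)
    rw [hLHS, hE, sq, Finset.sum_mul_sum, ← Finset.sum_sub_distrib]
    refine Finset.sum_congr rfl (fun h _ => ?_)
    rw [← Finset.sum_sub_distrib]
    exact Finset.sum_congr rfl (fun h' _ => by ring)
  -- apply the per-pair covariance bound
  have hstep1 : variance (fun ω => ∑ h ∈ H, w h * ∏ v ∈ h, Y v ω) μ
      ≤ ∑ h ∈ H, ∑ h' ∈ H, ∑ S ∈ (h ∩ h').powerset.erase ∅,
          (4*L)^S.card * (|w h| * ∏ v ∈ h, mb v) * (|w h'| * ∏ v ∈ h' \ S, mb v) := by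
    rw [hvar]
    refine Finset.sum_le_sum (fun h _ => Finset.sum_le_sum (fun h' _ => ?_))
    exact cov_le μ Y hmeas hindep hmom L hL hcmb w h h'
  -- muPar facts
  set G : Finset (Fin n) → ℝ :=
    fun S => ∑ h ∈ H.filter (fun h => S ⊆ h), |w h| * ∏ v ∈ h \ S, mb v with hGdef
  have hmuPar : ∀ r, muPar n H w mb r
      = sSup {x : ℝ | ∃ S : Finset (Fin n), S.card = r ∧ x = G S} := fun r => rfl
  have hGnn : ∀ S, 0 ≤ G S := by
    intro S
    refine Finset.sum_nonneg (fun h _ => mul_nonneg (abs_nonneg _)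
      (Finset.prod_nonneg (fun v _ => hmb0 v)))
  have hbdd : ∀ r, BddAbove {x : ℝ | ∃ S : Finset (Fin n), S.card = r ∧ x = G S} := by
    intro r
    refine Set.Finite.bddAbove (((Set.finite_range G).subset) ?_)
    rintro x ⟨S, -, rfl⟩; exact ⟨S, rfl⟩
  have hle_mu : ∀ S : Finset (Fin n), G S ≤ muPar n H w mb S.card := by
    intro S; rw [hmuPar]; exact le_csSup (hbdd _) ⟨S, rfl, rfl⟩
  have hmu_nn : ∀ r, 0 ≤ muPar n H w mb r := by
    intro r
    by_cases hr : ∃ S : Finset (Fin n), S.card = r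
    · obtain ⟨S, rfl⟩ := hr; exact (hGnn S).trans (hle_mu S)
    · have hset : {x : ℝ | ∃ S : Finset (Fin n), S.card = r ∧ x = G S} = ∅ := by
        ext x
        simp only [Set.mem_setOf_eq, Set.mem_empty_iff_false, iff_false, not_exists]
        intro S hS; exact absurd ⟨S, hS.1⟩ hr
      rw [hmuPar, hset, Real.sSup_empty]
  have hmu0 : muPar n H w mb 0 = ∑ h ∈ H, |w h| * ∏ v ∈ h, mb v := by
    have hset : {x : ℝ | ∃ S : Finset (Fin n), S.card = 0 ∧ x = G S} = {G ∅} := by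
      ext x
      simp only [Set.mem_setOf_eq, Set.mem_singleton_iff, Finset.card_eq_zero]
      constructor
      · rintro ⟨S, rfl, rfl⟩; rfl
      · intro hx; exact ⟨∅, rfl, hx⟩
    rw [hmuPar 0, hset, csSup_singleton, hGdef]
    simp only [Finset.sdiff_empty]
    rw [Finset.filter_true_of_mem (fun h _ => Finset.empty_subset h)]
  -- the max without the μ₀ factor
  set M' : ℝ := (Finset.Icc 1 q).sup' (Finset.nonempty_Icc.mpr hq)
    (fun r => muPar n H w mb r * 4^r * L^r) with hM'def
  have h1mem : 1 ∈ Finset.Icc 1 q := Finset.mem_Icc.mpr ⟨le_refl 1, hq⟩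
  have hM'nn : 0 ≤ M' := by
    refine le_trans ?_ (Finset.le_sup' (fun r => muPar n H w mb r * 4^r * L^r) h1mem)
    have := hmu_nn 1; positivity
  -- per h bound
  have hstep2 : ∀ h ∈ H,
      (∑ h' ∈ H, ∑ S ∈ (h ∩ h').powerset.erase ∅,
        (4*L)^S.card * (|w h| * ∏ v ∈ h, mb v) * (|w h'| * ∏ v ∈ h' \ S, mb v))
      ≤ 2^q * ((|w h| * ∏ v ∈ h, mb v) * M') := by
    intro h hH
    have hAnn : 0 ≤ |w h| * ∏ v ∈ h, mb v :=
      mul_nonneg (abs_nonneg _) (Finset.prod_nonneg (fun v _ => hmb0 v))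
    have hsets : ∀ h' : Finset (Fin n),
        (h ∩ h').powerset.erase ∅ = (h.powerset.erase ∅).filter (fun S => S ⊆ h') := by
      intro h'
      ext S
      simp only [Finset.mem_erase, Finset.mem_powerset, Finset.mem_filter,
        Finset.subset_inter_iff]
      tauto
    calc (∑ h' ∈ H, ∑ S ∈ (h ∩ h').powerset.erase ∅,
          (4*L)^S.card * (|w h| * ∏ v ∈ h, mb v) * (|w h'| * ∏ v ∈ h' \ S, mb v))
        = ∑ h' ∈ H, ∑ S ∈ h.powerset.erase ∅, (if S ⊆ h' then
          (4*L)^S.card * (|w h| * ∏ v ∈ h, mb v) * (|w h'| * ∏ v ∈ h' \ S, mb v) else 0) := by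
          refine Finset.sum_congr rfl (fun h' _ => ?_)
          rw [hsets h', Finset.sum_filter]
      _ = ∑ S ∈ h.powerset.erase ∅, ∑ h' ∈ H, (if S ⊆ h' then
          (4*L)^S.card * (|w h| * ∏ v ∈ h, mb v) * (|w h'| * ∏ v ∈ h' \ S, mb v) else 0) :=
          Finset.sum_comm
      _ = ∑ S ∈ h.powerset.erase ∅, ((4*L)^S.card * (|w h| * ∏ v ∈ h, mb v)) * G S := by
          refine Finset.sum_congr rfl (fun S _ => ?_)
          rw [← Finset.sum_filter, hGdef, Finset.mul_sum]
      _ ≤ ∑ S ∈ h.powerset.erase ∅,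
            ((4*L)^S.card * (|w h| * ∏ v ∈ h, mb v)) * muPar n H w mb S.card := by
          refine Finset.sum_le_sum (fun S _ => ?_)
          refine mul_le_mul_of_nonneg_left (hle_mu S) ?_
          exact mul_nonneg (pow_nonneg (by linarith) _) hAnn
      _ ≤ ∑ S ∈ h.powerset.erase ∅, (|w h| * ∏ v ∈ h, mb v) * M' := by
          refine Finset.sum_le_sum (fun S hS => ?_)
          rw [Finset.mem_erase, Finset.mem_powerset] at hS
          have hc1 : 1 ≤ S.card := Finset.card_pos.mpr (Finset.nonempty_iff_ne_empty.mpr hS.1)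
          have hc2 : S.card ≤ q := le_trans (Finset.card_le_card hS.2) (hcard h hH)
          have hmem : S.card ∈ Finset.Icc 1 q := Finset.mem_Icc.mpr ⟨hc1, hc2⟩
          have hbound : (4*L)^S.card * muPar n H w mb S.card ≤ M' := by
            have : (4*L)^S.card * muPar n H w mb S.card
                = muPar n H w mb S.card * 4^S.card * L^S.card := by
              rw [mul_pow]; ring
            rw [this, hM'def]
            exact Finset.le_sup' (fun r => muPar n H w mb r * 4^r * L^r) hmem
          calc (4*L)^S.card * (|w h| * ∏ v ∈ h, mb v) * muPar n H w mb S.card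
              = (|w h| * ∏ v ∈ h, mb v) * ((4*L)^S.card * muPar n H w mb S.card) := by ring
            _ ≤ (|w h| * ∏ v ∈ h, mb v) * M' := mul_le_mul_of_nonneg_left hbound hAnn
      _ = ((h.powerset.erase ∅).card : ℝ) * ((|w h| * ∏ v ∈ h, mb v) * M') := by
          rw [Finset.sum_const, nsmul_eq_mul]
      _ ≤ 2^q * ((|w h| * ∏ v ∈ h, mb v) * M') := by
          refine mul_le_mul_of_nonneg_right ?_ (mul_nonneg hAnn hM'nn)
          have hcn : (h.powerset.erase ∅).card ≤ 2^q := by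
            refine le_trans (Finset.card_le_card (Finset.erase_subset _ _)) ?_
            rw [Finset.card_powerset]
            exact Nat.pow_le_pow_right (by norm_num) (hcard h hH)
          calc ((h.powerset.erase ∅).card : ℝ) ≤ ((2^q : ℕ) : ℝ) := by exact_mod_cast hcn
            _ = 2^q := by push_cast; ring
  -- combine
  have hstep3 : variance (fun ω => ∑ h ∈ H, w h * ∏ v ∈ h, Y v ω) μ
      ≤ 2^q * (muPar n H w mb 0 * M') := by
    refine hstep1.trans ((Finset.sum_le_sum hstep2).trans ?_)
    have : ∑ h ∈ H, 2^q * ((|w h| * ∏ v ∈ h, mb v) * M')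
        = 2^q * ((∑ h ∈ H, |w h| * ∏ v ∈ h, mb v) * M') := by
      rw [Finset.sum_mul, Finset.mul_sum]
    rw [this, hmu0]
  refine hstep3.trans ?_
  obtain ⟨r0, hr0m, hr0⟩ := Finset.exists_mem_eq_sup' (Finset.nonempty_Icc.mpr hq)
    (fun r => muPar n H w mb r * 4^r * L^r)
  have hmuM : muPar n H w mb 0 * M' ≤ (Finset.Icc 1 q).sup' (Finset.nonempty_Icc.mpr hq)
      (fun r => muPar n H w mb 0 * muPar n H w mb r * 4^r * L^r) := by
    rw [hM'def, hr0]
    calc muPar n H w mb 0 * (muPar n H w mb r0 * 4^r0 * L^r0)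
        = muPar n H w mb 0 * muPar n H w mb r0 * 4^r0 * L^r0 := by ring
      _ ≤ _ := Finset.le_sup'
          (fun r => muPar n H w mb 0 * muPar n H w mb r * 4^r * L^r) hr0m
  have hGsupnn : 0 ≤ (Finset.Icc 1 q).sup' (Finset.nonempty_Icc.mpr hq)
      (fun r => muPar n H w mb 0 * muPar n H w mb r * 4^r * L^r) := by
    refine le_trans ?_ (Finset.le_sup'
      (fun r => muPar n H w mb 0 * muPar n H w mb r * 4^r * L^r) h1mem)
    have h0 := hmu_nn 0
    have h1 := hmu_nn 1
    positivity
  calc 2^q * (muPar n H w mb 0 * M')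
      ≤ 2^q * (Finset.Icc 1 q).sup' (Finset.nonempty_Icc.mpr hq)
        (fun r => muPar n H w mb 0 * muPar n H w mb r * 4^r * L^r) :=
        mul_le_mul_of_nonneg_left hmuM (by positivity)
    _ ≤ 2 * q * 4^q * (Finset.Icc 1 q).sup' (Finset.nonempty_Icc.mpr hq)
        (fun r => muPar n H w mb 0 * muPar n H w mb r * 4^r * L^r) := by
        refine mul_le_mul_of_nonneg_right ?_ hGsupnn
        have hq1 : (1:ℝ) ≤ (q:ℝ) := by exact_mod_cast hq
        have h24 : (2:ℝ)^q ≤ 4^q := pow_le_pow_left₀ (by norm_num) (by norm_num) q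
        have h4pos : (0:ℝ) < 4^q := by positivity
        nlinarith
end

section
/- Let G' be a finite hypergraph with k hyperedges, c connected components, and every vertex of degree at least 2. Then there exist two disjoint sets of hyperedges S_1 and S_2, each containing exactly one hyperedge per connected component (so |S_1| = |S_2| = c), and an ordering h^(1), ..., h^(k) of the hyperedges such that: (i) {h^(1),...,h^(c)} = S_2 and {h^(k-c+1),...,h^(k)} = S_1; and (ii) for every s with 1 ≤ s ≤ k - c, the subhypergraph induced by the hyperedges h^(s), ..., h^(k) has exactly c connected components. -/
open SimpleGraph Finset

/-- The intersection (line) graph of the hyperedges indexed by a subset `T`: two hyperedge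
indices are adjacent iff they are distinct and their vertex sets intersect. -/
def lineGraph {k : ℕ} {V : Type*} [DecidableEq V] (E : Fin k → Finset V) (T : Finset (Fin k)) :
    SimpleGraph {i : Fin k // i ∈ T} where
  Adj i j := i ≠ j ∧ ((E i.1) ∩ (E j.1)).Nonempty
  symm := by
    constructor; intro i j h
    exact ⟨Ne.symm h.1, by rcases h.2 with ⟨v, hv⟩; exact ⟨v, by
      simp only [Finset.mem_inter] at hv ⊢; exact ⟨hv.2, hv.1⟩⟩⟩
  loopless := by constructor; intro i h; exact h.1 rfl

/-- The number of connected components of the subhypergraph induced by hyperedges in `T`. -/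
noncomputable def compCount {k : ℕ} {V : Type*} [DecidableEq V] (E : Fin k → Finset V)
    (T : Finset (Fin k)) : ℕ :=
  Nat.card (lineGraph E T).ConnectedComponent


/-- Connectivity within a finite vertex set: any two members are joined by a walk whose
support stays in the set. -/
def ConnIn {α : Type*} (G : SimpleGraph α) (s : Finset α) : Prop :=
  ∀ ⦃x⦄, x ∈ s → ∀ ⦃y⦄, y ∈ s → ∃ w : G.Walk x y, ∀ z ∈ w.support, z ∈ s

theorem exists_noncut {α : Type*} [DecidableEq α] {G : SimpleGraph α} {s : Finset α}
    (hs : ConnIn G s) (h2 : 2 ≤ s.card) : ∃ v ∈ s, ConnIn G (s.erase v) := by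
  classical
  obtain ⟨u, hu⟩ := Finset.card_pos.mp (lt_of_lt_of_le two_pos h2)
  have H : ∀ x ∈ s, ∃ n, ∃ w : G.Walk u x, w.length = n ∧ ∀ z ∈ w.support, z ∈ s := by
    intro x hx
    obtain ⟨w, hw⟩ := hs hu hx
    exact ⟨w.length, w, rfl, hw⟩
  set d : α → ℕ := fun x => if hx : x ∈ s then Nat.find (H x hx) else 0 with hd
  have hds : ∀ x (hx : x ∈ s), d x = Nat.find (H x hx) := fun x hx => dif_pos hx
  have hspec : ∀ x (hx : x ∈ s), ∃ w : G.Walk u x, w.length = d x ∧ ∀ z ∈ w.support, z ∈ s := by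
    intro x hx; rw [hds x hx]; exact Nat.find_spec (H x hx)
  have hmin : ∀ x (hx : x ∈ s) (w : G.Walk u x), (∀ z ∈ w.support, z ∈ s) → d x ≤ w.length := by
    intro x hx w hw; rw [hds x hx]; exact Nat.find_min' (H x hx) ⟨w, rfl, hw⟩
  obtain ⟨v, hv, hvmax⟩ := s.exists_max_image d ⟨u, hu⟩
  have hdv : 1 ≤ d v := by
    by_contra h
    obtain ⟨x, hx, hxu⟩ := Finset.exists_mem_ne (s := s) (by omega) u
    have h1 : d x ≤ 0 := le_trans (hvmax x hx) (by omega)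
    obtain ⟨w, hwl, -⟩ := hspec x hx
    have hw0 : w.length = 0 := by omega
    exact hxu (Walk.eq_of_length_eq_zero hw0).symm
  -- the min-length walk from u to any x ≠ v avoids v
  have key : ∀ x ∈ s.erase v, ∃ w : G.Walk u x, ∀ z ∈ w.support, z ∈ s.erase v := by
    intro x hx
    have hxs : x ∈ s := Finset.mem_of_mem_erase hx
    have hxv : x ≠ v := Finset.ne_of_mem_erase hx
    obtain ⟨w, hwl, hws⟩ := hspec x hxs
    have hvw : v ∉ w.support := by
      intro hvs
      have h1 : d v ≤ (w.takeUntil v hvs).length :=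
        hmin v hv _ (fun z hz => hws z (w.support_takeUntil_subset hvs hz))
      have h2 : 1 ≤ (w.dropUntil v hvs).length := by
        rcases Nat.eq_zero_or_pos (w.dropUntil v hvs).length with h | h
        · exact absurd (Walk.eq_of_length_eq_zero h) hxv.symm
        · exact h
      have h3 : (w.takeUntil v hvs).length + (w.dropUntil v hvs).length = w.length := by
        have h5 := congrArg Walk.length (w.take_spec hvs)
        rwa [Walk.length_append] at h5
      have h4 : d x ≤ d v := hvmax x hxs
      omega
    exact ⟨w, fun z hz => Finset.mem_erase.mpr ⟨fun h => hvw (h ▸ hz), hws z hz⟩⟩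
  exact ⟨v, hv, by
    intro x hx y hy
    obtain ⟨wx, hwx⟩ := key x hx
    obtain ⟨wy, hwy⟩ := key y hy
    refine ⟨wx.reverse.append wy, ?_⟩
    intro z hz
    rcases (Walk.mem_support_append_iff _ _).mp hz with h | h
    · exact hwx z (by simpa [Walk.support_reverse] using h)
    · exact hwy z h⟩

section Hyper

variable {k : ℕ} {V : Type*} [Fintype V] [DecidableEq V]

/-- The line graph on all hyperedge indices. -/
def G0 (E : Fin k → Finset V) : SimpleGraph (Fin k) where
  Adj i j := i ≠ j ∧ ((E i) ∩ (E j)).Nonempty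
  symm := by
    constructor; intro i j h
    exact ⟨Ne.symm h.1, by rw [Finset.inter_comm]; exact h.2⟩
  loopless := by constructor; intro i h; exact h.1 rfl

variable (E : Fin k → Finset V)

open scoped Classical in
/-- The vertex set of the connected component `C`. -/
noncomputable def suppC (C : (G0 E).ConnectedComponent) : Finset (Fin k) :=
  Finset.univ.filter (fun i => (G0 E).connectedComponentMk i = C)

lemma mem_suppC {C : (G0 E).ConnectedComponent} {i : Fin k} :
    i ∈ suppC E C ↔ (G0 E).connectedComponentMk i = C := by
  simp [suppC]

/-- The invariant: every component meets `T` in a nonempty set connected within itself. -/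
def Qinv (T : Finset (Fin k)) : Prop :=
  ∀ C : (G0 E).ConnectedComponent,
    (T ∩ suppC E C).Nonempty ∧ ConnIn (G0 E) (T ∩ suppC E C)

lemma walk_to_line {T : Finset (Fin k)} :
    ∀ {i j : Fin k} (w : (G0 E).Walk i j), (∀ z ∈ w.support, z ∈ T) →
    ∀ (hi : i ∈ T) (hj : j ∈ T), (_root_.lineGraph E T).Reachable ⟨i, hi⟩ ⟨j, hj⟩ := by
  intro i j w
  induction w with
  | nil => intro _ hi hj; rfl
  | @cons a b j hab p ih =>
    intro hw hi hj
    have hb : b ∈ T := hw b (by simp [Walk.support_cons, p.start_mem_support])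
    have hadj : (_root_.lineGraph E T).Adj ⟨a, hi⟩ ⟨b, hb⟩ :=
      ⟨fun h => hab.1 (congrArg Subtype.val h), hab.2⟩
    exact hadj.reachable.trans (ih (fun z hz => hw z (by simp [Walk.support_cons, hz])) hb hj)

lemma line_to_walk {T : Finset (Fin k)} {i j : Fin k} {hi : i ∈ T} {hj : j ∈ T}
    (h : (_root_.lineGraph E T).Reachable ⟨i, hi⟩ ⟨j, hj⟩) :
    ∃ w : (G0 E).Walk i j, ∀ z ∈ w.support, z ∈ T := by
  obtain ⟨w⟩ := h
  let f : _root_.lineGraph E T →g G0 E :=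
    ⟨Subtype.val, fun {a b} hab => ⟨fun h => hab.1 (Subtype.ext h), hab.2⟩⟩
  refine ⟨w.map f, ?_⟩
  intro z hz
  rw [Walk.support_map, List.mem_map] at hz
  obtain ⟨a, -, rfl⟩ := hz
  exact a.2

lemma g0_reachable_iff {i j : Fin k} :
    (G0 E).Reachable i j ↔
      (_root_.lineGraph E Finset.univ).Reachable ⟨i, Finset.mem_univ i⟩ ⟨j, Finset.mem_univ j⟩ := by
  constructor
  · rintro ⟨w⟩
    exact walk_to_line E w (fun z _ => Finset.mem_univ z) _ _
  · intro h
    obtain ⟨w, -⟩ := line_to_walk E h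
    exact ⟨w⟩

lemma count_of_Q {T : Finset (Fin k)} (hQ : Qinv E T) :
    _root_.compCount E T = _root_.compCount E Finset.univ := by
  classical
  let f : _root_.lineGraph E T →g _root_.lineGraph E Finset.univ :=
    ⟨fun x => ⟨x.1, Finset.mem_univ _⟩,
     fun {a b} hab => ⟨fun h => hab.1 (Subtype.ext (Subtype.mk_eq_mk.mp h)), hab.2⟩⟩
  have hbij : Function.Bijective (ConnectedComponent.map f) := by
    constructor
    · intro A B
      refine ConnectedComponent.ind₂ (fun a b hab => ?_) A B
      rw [ConnectedComponent.map_mk, ConnectedComponent.map_mk, ConnectedComponent.eq] at hab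
      obtain ⟨w, -⟩ := line_to_walk E hab
      have hreach : (G0 E).Reachable a.1 b.1 := ⟨w⟩
      set C := (G0 E).connectedComponentMk a.1 with hC
      have hbC : b.1 ∈ T ∩ suppC E C := by
        rw [Finset.mem_inter, mem_suppC]
        exact ⟨b.2, (ConnectedComponent.sound hreach).symm⟩
      have haC : a.1 ∈ T ∩ suppC E C := by
        rw [Finset.mem_inter, mem_suppC]; exact ⟨a.2, rfl⟩
      obtain ⟨w', hw'⟩ := (hQ C).2 haC hbC
      rw [ConnectedComponent.eq]
      have := walk_to_line E w' (fun z hz => (Finset.mem_inter.mp (hw' z hz)).1) a.2 b.2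
      simpa using this
    · intro B
      refine ConnectedComponent.ind (fun b => ?_) B
      obtain ⟨j, hjT⟩ := (hQ ((G0 E).connectedComponentMk b.1)).1
      rw [Finset.mem_inter, mem_suppC] at hjT
      refine ⟨(_root_.lineGraph E T).connectedComponentMk ⟨j, hjT.1⟩, ?_⟩
      rw [ConnectedComponent.map_mk, ConnectedComponent.eq]
      have hreach : (G0 E).Reachable j b.1 := (ConnectedComponent.exact hjT.2)
      obtain ⟨w⟩ := hreach
      have := walk_to_line E w (fun z _ => Finset.mem_univ z) (Finset.mem_univ j) (Finset.mem_univ b.1)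
      exact this
  unfold _root_.compCount
  exact Nat.card_eq_of_bijective _ hbij


lemma erase_inter_self {T : Finset (Fin k)} {v : Fin k} {C : (G0 E).ConnectedComponent} :
    T.erase v ∩ suppC E C = (T ∩ suppC E C).erase v := by
  ext z; simp only [Finset.mem_inter, Finset.mem_erase]; tauto

lemma erase_inter {T : Finset (Fin k)} {v : Fin k} {C C' : (G0 E).ConnectedComponent}
    (hvC : v ∈ suppC E C) (hne : C' ≠ C) :
    T.erase v ∩ suppC E C' = T ∩ suppC E C' := by
  ext z
  simp only [Finset.mem_inter, Finset.mem_erase]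
  constructor
  · tauto
  · rintro ⟨hzT, hzC⟩
    refine ⟨⟨fun h => ?_, hzT⟩, hzC⟩
    subst h
    rw [mem_suppC] at hvC hzC
    exact hne (hzC ▸ hvC)

lemma Q_erase {T : Finset (Fin k)} {v : Fin k} {C : (G0 E).ConnectedComponent}
    (hQ : Qinv E T) (hv : v ∈ T ∩ suppC E C) (h2 : 2 ≤ (T ∩ suppC E C).card)
    (hconn : ConnIn (G0 E) ((T ∩ suppC E C).erase v)) : Qinv E (T.erase v) := by
  intro C'
  by_cases hC' : C' = C
  · subst hC'
    rw [erase_inter_self]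
    constructor
    · rw [← Finset.card_pos, Finset.card_erase_of_mem hv]
      omega
    · exact hconn
  · rw [erase_inter E (Finset.mem_inter.mp hv).2 hC']
    exact hQ C'

lemma Q_univ : Qinv E Finset.univ := by
  intro C
  rw [Finset.univ_inter]
  constructor
  · obtain ⟨i, hi⟩ := C.exists_rep
    exact ⟨i, mem_suppC E |>.mpr hi⟩
  · intro x hx y hy
    rw [mem_suppC] at hx hy
    obtain ⟨w⟩ := ConnectedComponent.exact (hx.trans hy.symm)
    refine ⟨w, fun z hz => ?_⟩
    rw [mem_suppC]
    rw [← hx]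
    exact (ConnectedComponent.sound ⟨w.takeUntil z hz⟩).symm

lemma suppC_two (hE : ∀ i, (E i).Nonempty)
    (hdeg : ∀ v : V, 2 ≤ (Finset.univ.filter (fun i => v ∈ E i)).card)
    (C : (G0 E).ConnectedComponent) : 2 ≤ (suppC E C).card := by
  obtain ⟨i, hi⟩ := C.exists_rep
  obtain ⟨v, hv⟩ := hE i
  have hi' : i ∈ Finset.univ.filter (fun j => v ∈ E j) := by simp [hv]
  obtain ⟨j, hj, hji⟩ := Finset.exists_mem_ne
    (s := Finset.univ.filter (fun j => v ∈ E j)) (by have := hdeg v; omega) i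
  rw [Finset.mem_filter] at hj
  have hadj : (G0 E).Adj i j := ⟨fun h => hji h.symm, ⟨v, Finset.mem_inter.mpr ⟨hv, hj.2⟩⟩⟩
  refine Finset.one_lt_card.mpr ⟨i, ?_, j, ?_, fun h => hji h.symm⟩
  · exact (mem_suppC E).mpr hi
  · exact (mem_suppC E).mpr ((ConnectedComponent.sound hadj.symm.reachable).trans hi)

noncomputable instance : Fintype ((G0 E).ConnectedComponent) := Fintype.ofFinite _

open scoped Classical in
lemma sum_inter_card (T : Finset (Fin k)) :
    ∑ C : (G0 E).ConnectedComponent, (T ∩ suppC E C).card = T.card := by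
  rw [Finset.card_eq_sum_card_fiberwise
    (f := fun i => (G0 E).connectedComponentMk i) (t := Finset.univ) (fun x _ => Finset.mem_univ _)]
  refine Finset.sum_congr rfl (fun C _ => ?_)
  congr 1
  ext z
  simp [mem_suppC, suppC]


lemma peel_phase2 (n : ℕ) : ∀ (T : Finset (Fin k)), T.card = n → Qinv E T →
    ∃ l : List (Fin k), l.Nodup ∧ l.toFinset = T ∧ l.length = n ∧
      ∀ s, s + Fintype.card ((G0 E).ConnectedComponent) ≤ n → Qinv E ((l.drop s).toFinset) := by
  induction n using Nat.strong_induction_on with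
  | _ n ih =>
  intro T hcard hQ
  set c' := Fintype.card ((G0 E).ConnectedComponent) with hc'
  by_cases hn : n ≤ c'
  · refine ⟨T.toList, T.nodup_toList, T.toList_toFinset, by simp [hcard], ?_⟩
    intro s hs
    have hs0 : s = 0 := by omega
    subst hs0
    simpa [T.toList_toFinset] using hQ
  · -- find a component with at least two remaining edges
    have hsum := sum_inter_card E T
    have hone : ∀ C, 1 ≤ (T ∩ suppC E C).card :=
      fun C => Finset.card_pos.mpr (hQ C).1
    have hex : ∃ C, 2 ≤ (T ∩ suppC E C).card := by
      by_contra h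
      push_neg at h
      have : ∑ C : (G0 E).ConnectedComponent, (T ∩ suppC E C).card ≤
          ∑ _C : (G0 E).ConnectedComponent, 1 :=
        Finset.sum_le_sum (fun C _ => by have := h C; omega)
      simp only [Finset.sum_const, Finset.card_univ, smul_eq_mul, mul_one] at this
      omega
    obtain ⟨C, hC2⟩ := hex
    obtain ⟨v, hv, hconn⟩ := exists_noncut (hQ C).2 hC2
    have hvT : v ∈ T := (Finset.mem_inter.mp hv).1
    have hQ' : Qinv E (T.erase v) := Q_erase E hQ hv hC2 hconn
    have hcard' : (T.erase v).card = n - 1 := by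
      rw [Finset.card_erase_of_mem hvT]; omega
    obtain ⟨l', hnd', htf', hlen', hsuf'⟩ := ih (n - 1) (by omega) (T.erase v) hcard' hQ'
    refine ⟨v :: l', ?_, ?_, ?_, ?_⟩
    · rw [List.nodup_cons]
      exact ⟨fun h => Finset.notMem_erase v T (htf' ▸ List.mem_toFinset.mpr h), hnd'⟩
    · rw [List.toFinset_cons, htf', Finset.insert_erase hvT]
    · simp [hlen']; omega
    · intro s hs
      match s with
      | 0 => simpa [List.toFinset_cons, htf', Finset.insert_erase hvT] using hQ
      | s + 1 =>
        rw [List.drop_succ_cons]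
        exact hsuf' s (by omega)

lemma peel_phase1 : ∀ (cs : List ((G0 E).ConnectedComponent)) (T : Finset (Fin k)),
    cs.Nodup → Qinv E T → (∀ C ∈ cs, 2 ≤ (T ∩ suppC E C).card) →
    ∃ l : List (Fin k), List.Forall₂ (fun v C => v ∈ suppC E C) l cs ∧ l.Nodup ∧
      l.toFinset ⊆ T ∧ ∀ s, Qinv E (T \ (l.take s).toFinset) := by
  intro cs
  induction cs with
  | nil =>
    intro T _ hQ _
    exact ⟨[], List.Forall₂.nil, List.nodup_nil, by simp, fun s => by simpa using hQ⟩
  | cons C cs' ih =>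
    intro T hnd hQ hcards
    have hC2 : 2 ≤ (T ∩ suppC E C).card := hcards C (List.mem_cons_self)
    obtain ⟨v, hv, hconn⟩ := exists_noncut (hQ C).2 hC2
    have hvT : v ∈ T := (Finset.mem_inter.mp hv).1
    have hvC : v ∈ suppC E C := (Finset.mem_inter.mp hv).2
    have hQ' : Qinv E (T.erase v) := Q_erase E hQ hv hC2 hconn
    have hcards' : ∀ C' ∈ cs', 2 ≤ ((T.erase v) ∩ suppC E C').card := by
      intro C' hC'
      have hne : C' ≠ C := fun h => (List.nodup_cons.mp hnd).1 (h ▸ hC')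
      rw [erase_inter E hvC hne]
      exact hcards C' (List.mem_cons_of_mem _ hC')
    obtain ⟨l', hf2', hnd', hsub', hQs'⟩ := ih (T.erase v) (List.nodup_cons.mp hnd).2 hQ' hcards'
    refine ⟨v :: l', List.Forall₂.cons hvC hf2', ?_, ?_, ?_⟩
    · rw [List.nodup_cons]
      exact ⟨fun h => Finset.notMem_erase v T (hsub' (List.mem_toFinset.mpr h)), hnd'⟩
    · rw [List.toFinset_cons]
      intro z hz
      rcases Finset.mem_insert.mp hz with h | h
      · exact h ▸ hvT
      · exact Finset.mem_of_mem_erase (hsub' h)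
    · intro s
      match s with
      | 0 => simpa using hQ
      | s + 1 =>
        rw [List.take_succ_cons, List.toFinset_cons]
        have : T \ insert v (l'.take s).toFinset = (T.erase v) \ (l'.take s).toFinset := by
          ext z
          simp only [Finset.mem_sdiff, Finset.mem_insert, Finset.mem_erase]
          tauto
        rw [this]
        exact hQs' s

end Hyper

lemma drop_take_toFinset {α : Type*} [DecidableEq α] (l : List α) (hnd : l.Nodup) (n : ℕ) :
    l.toFinset \ (l.take n).toFinset = (l.drop n).toFinset := by
  set A := l.take n with hA
  set B := l.drop n with hB
  have hsplit : A ++ B = l := List.take_append_drop n l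
  have hnd' : (A ++ B).Nodup := by rw [hsplit]; exact hnd
  have hdisj : Disjoint A.toFinset B.toFinset := by
    rw [List.disjoint_toFinset_iff_disjoint]
    exact List.disjoint_of_nodup_append hnd'
  rw [← hsplit, List.toFinset_append, Finset.union_sdiff_cancel_left hdisj]

lemma exists_perm_of_list {k : ℕ} (gl : List (Fin k)) (hnd : gl.Nodup) (hlen : gl.length = k) :
    ∃ e : Equiv.Perm (Fin k), ∀ s : ℕ,
      Finset.image e (Finset.univ.filter (fun t : Fin k => s ≤ (t : ℕ))) =
        (gl.drop s).toFinset := by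
  have hb : ∀ t : Fin k, (t : ℕ) < gl.length := fun t => by have := t.2; omega
  let f : Fin k → Fin k := fun t => gl.get ⟨(t : ℕ), hb t⟩
  have hinj : Function.Injective f := by
    intro t1 t2 h
    have := List.nodup_iff_injective_get.mp hnd h
    exact Fin.ext (by simpa using this)
  refine ⟨Equiv.ofBijective f ((Fintype.bijective_iff_injective_and_card f).mpr ⟨hinj, rfl⟩),
    fun s => ?_⟩
  ext x
  simp only [Finset.mem_image, Finset.mem_filter, Finset.mem_univ, true_and,
    List.mem_toFinset, Equiv.ofBijective_apply]
  constructor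
  · rintro ⟨t, hst, rfl⟩
    rw [List.mem_iff_getElem]
    refine ⟨(t : ℕ) - s, by rw [List.length_drop]; omega, ?_⟩
    rw [List.getElem_drop]
    show gl[s + ((t:ℕ) - s)]'_ = gl.get ⟨(t:ℕ), hb t⟩
    congr 1
    omega
  · intro hx
    rw [List.mem_iff_getElem] at hx
    obtain ⟨j, hj, rfl⟩ := hx
    rw [List.length_drop] at hj
    refine ⟨⟨s + j, by omega⟩, by simp, ?_⟩
    rw [List.getElem_drop]
    rfl

lemma forall2_mem {α β : Type*} {R : α → β → Prop} :
    ∀ {l : List α} {cs : List β}, List.Forall₂ R l cs → ∀ C ∈ cs, ∃ v ∈ l, R v C := by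
  intro l cs h
  induction h with
  | nil => intro C hC; cases hC
  | cons hr _ ihf =>
    intro C hC
    rcases List.mem_cons.mp hC with rfl | hmem
    · exact ⟨_, List.mem_cons_self, hr⟩
    · obtain ⟨v, hv1, hv2⟩ := ihf C hmem
      exact ⟨v, List.mem_cons_of_mem _ hv1, hv2⟩

/-- Ordering Lemma: in a hypergraph with `k` hyperedges, `c` connected components and all
vertex degrees at least `2`, there are disjoint sets `S₁, S₂` of hyperedges, one per
component each, and an ordering of the hyperedges starting with `S₂` and ending with `S₁`
such that every suffix of length at least `c` induces exactly `c` connected components. -/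
theorem stmt_19 {k : ℕ} {V : Type*} [Fintype V] [DecidableEq V]
    (E : Fin k → Finset V) (hE : ∀ i, (E i).Nonempty)
    (hdeg : ∀ v : V, 2 ≤ (Finset.univ.filter (fun i => v ∈ E i)).card)
    (c : ℕ) (hc : c = compCount E Finset.univ) :
    ∃ (S₁ S₂ : Finset (Fin k)) (e : Equiv.Perm (Fin k)),
      Disjoint S₁ S₂ ∧ S₁.card = c ∧ S₂.card = c ∧
      (∀ comp : (lineGraph E Finset.univ).ConnectedComponent,
        ∃! i : Fin k, i ∈ S₁ ∧
          (lineGraph E Finset.univ).connectedComponentMk ⟨i, Finset.mem_univ i⟩ = comp) ∧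
      (∀ comp : (lineGraph E Finset.univ).ConnectedComponent,
        ∃! i : Fin k, i ∈ S₂ ∧
          (lineGraph E Finset.univ).connectedComponentMk ⟨i, Finset.mem_univ i⟩ = comp) ∧
      S₂ = Finset.image e (Finset.univ.filter (fun s : Fin k => (s : ℕ) < c)) ∧
      S₁ = Finset.image e (Finset.univ.filter (fun s : Fin k => k - c ≤ (s : ℕ))) ∧
      (∀ s : ℕ, s < k - c →
        compCount E (Finset.image e (Finset.univ.filter (fun t : Fin k => s ≤ (t : ℕ)))) = c) := by
  classical
  -- the number of components of `G0 E` is `c`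
  have hiso : lineGraph E Finset.univ ≃g G0 E :=
    { toEquiv := Equiv.subtypeUnivEquiv Finset.mem_univ
      map_rel_iff' := by
        intro a b
        constructor
        · rintro ⟨hne, hint⟩
          exact ⟨fun h => hne (congrArg Subtype.val h), hint⟩
        · rintro ⟨hne, hint⟩
          exact ⟨fun h => hne (Subtype.ext h), hint⟩ }
  have hcc : Nat.card ((G0 E).ConnectedComponent) = c := by
    rw [hc]
    unfold compCount
    exact (Nat.card_congr hiso.connectedComponentEquiv.symm).symm ▸
      (Nat.card_congr hiso.connectedComponentEquiv).symm
  have hcF : Fintype.card ((G0 E).ConnectedComponent) = c := by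
    rw [← Nat.card_eq_fintype_card]; exact hcc
  have h2c : ∀ C, 2 ≤ (suppC E C).card := suppC_two E hE hdeg
  have hk2c : 2 * c ≤ k := by
    have hsum := sum_inter_card E (Finset.univ : Finset (Fin k))
    have h1 : ∀ C : (G0 E).ConnectedComponent,
        2 ≤ ((Finset.univ : Finset (Fin k)) ∩ suppC E C).card := by
      intro C; rw [Finset.univ_inter]; exact h2c C
    have h2 : ∑ _C : (G0 E).ConnectedComponent, 2 ≤
        ∑ C : (G0 E).ConnectedComponent, ((Finset.univ : Finset (Fin k)) ∩ suppC E C).card :=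
      Finset.sum_le_sum (fun C _ => h1 C)
    simp only [Finset.sum_const, Finset.card_univ, smul_eq_mul, hcF] at h2
    rw [hsum, Finset.card_univ, Fintype.card_fin] at h2
    omega
  -- phase 1 : peel one hyperedge from each component
  set cl := (Finset.univ : Finset ((G0 E).ConnectedComponent)).toList with hcl
  have hclnd : cl.Nodup := Finset.nodup_toList _
  have hcllen : cl.length = c := by rw [hcl, Finset.length_toList, Finset.card_univ, hcF]
  obtain ⟨l₀, hf2, hnd0, hsub0, hQ0s⟩ := peel_phase1 E cl Finset.univ hclnd (Q_univ E)
    (fun C _ => by rw [Finset.univ_inter]; exact h2c C)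
  have hl0len : l₀.length = c := by rw [List.Forall₂.length_eq hf2, hcllen]
  set T₁ := (Finset.univ : Finset (Fin k)) \ l₀.toFinset with hT₁
  have hQ1 : Qinv E T₁ := by
    have := hQ0s l₀.length
    rwa [List.take_length] at this
  have hl0card : l₀.toFinset.card = c := by
    rw [List.toFinset_card_of_nodup hnd0, hl0len]
  have hT₁card : T₁.card = k - c := by
    rw [hT₁, Finset.card_sdiff_of_subset (Finset.subset_univ _), Finset.card_univ, Fintype.card_fin,
      hl0card]
  -- phase 2 : peel the rest, one at a time
  obtain ⟨l₁, hnd1, htf1, hlen1, hsuf1⟩ := peel_phase2 E (k - c) T₁ hT₁card hQ1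
  set gl := l₀ ++ l₁ with hgl
  have hdisj01 : l₀.Disjoint l₁ := by
    intro a h0 h1
    have : a ∈ T₁ := htf1 ▸ List.mem_toFinset.mpr h1
    rw [hT₁, Finset.mem_sdiff] at this
    exact this.2 (List.mem_toFinset.mpr h0)
  have hglnd : gl.Nodup := List.Nodup.append hnd0 hnd1 hdisj01
  have hgltf : gl.toFinset = Finset.univ := by
    rw [hgl, List.toFinset_append, htf1, hT₁, Finset.union_sdiff_of_subset (Finset.subset_univ _)]
  have hgllen : gl.length = k := by
    have := List.toFinset_card_of_nodup hglnd
    rw [hgltf, Finset.card_univ, Fintype.card_fin] at this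
    omega
  obtain ⟨e, himg⟩ := exists_perm_of_list gl hglnd hgllen
  -- every suffix of length at least c satisfies the invariant
  have hQdrop : ∀ s, s ≤ k - c → Qinv E ((gl.drop s).toFinset) := by
    intro s hs
    by_cases hsc : s ≤ c
    · have htake : gl.take s = l₀.take s := by
        rw [hgl, List.take_append]
        have : s - l₀.length = 0 := by omega
        rw [this, List.take_zero, List.append_nil]
      have : (gl.drop s).toFinset = Finset.univ \ (l₀.take s).toFinset := by
        rw [← drop_take_toFinset gl hglnd s, hgltf, htake]
      rw [this]
      exact hQ0s s
    · have hdrop : gl.drop s = l₁.drop (s - c) := by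
        rw [hgl, List.drop_append]
        rw [List.drop_eq_nil_of_le (by omega : l₀.length ≤ s), List.nil_append, hl0len]
      rw [hdrop]
      exact hsuf1 (s - c) (by rw [hcF]; omega)
  -- both distinguished sets
  set S₂ := Finset.image e (Finset.univ.filter (fun t : Fin k => (t : ℕ) < c)) with hS₂
  set S₁ := Finset.image e (Finset.univ.filter (fun t : Fin k => k - c ≤ (t : ℕ))) with hS₁
  have hS1eq : S₁ = (gl.drop (k - c)).toFinset := himg (k - c)
  have hS2eq : S₂ = l₀.toFinset := by
    have h1 : (Finset.univ.filter (fun t : Fin k => (t : ℕ) < c)) =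
        Finset.univ \ (Finset.univ.filter (fun t : Fin k => c ≤ (t : ℕ))) := by
      ext t
      simp only [Finset.mem_filter, Finset.mem_univ, true_and, Finset.mem_sdiff]
      omega
    have h2 : S₂ = Finset.univ \ (gl.drop c).toFinset := by
      rw [hS₂, h1, Finset.image_sdiff _ _ e.injective, himg c,
        Finset.image_univ_equiv]
    have h3 : gl.drop c = l₁ := by
      rw [hgl, List.drop_append,
        List.drop_eq_nil_of_le (by omega : l₀.length ≤ c), List.nil_append, hl0len,
        Nat.sub_self, List.drop_zero]
    rw [h2, h3, htf1, hT₁, Finset.sdiff_sdiff_self_left, Finset.univ_inter]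
  have hS2card : S₂.card = c := by rw [hS2eq, hl0card]
  have hglF : (gl.drop (k - c)).toFinset = (l₁.drop (k - c - c)).toFinset := by
    rw [hgl, List.drop_append,
      List.drop_eq_nil_of_le (by omega : l₀.length ≤ k - c), List.nil_append, hl0len]
  have hS1card : S₁.card = c := by
    rw [hS1eq, hglF, List.toFinset_card_of_nodup ((List.drop_sublist _ _).nodup hnd1),
      List.length_drop, hlen1]
    omega
  have hQF : Qinv E ((gl.drop (k - c)).toFinset) := hQdrop (k - c) le_rfl
  -- in a `c`-element set meeting every component, each component is met exactly once
  have hcard1 : ∀ S : Finset (Fin k), S.card = c → (∀ C, (S ∩ suppC E C).Nonempty) →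
      ∀ C, (S ∩ suppC E C).card = 1 := by
    intro S hScard hSne C
    by_contra h
    have h2le : 2 ≤ (S ∩ suppC E C).card := by
      have := Finset.card_pos.mpr (hSne C); omega
    have hlt : ∑ _C : (G0 E).ConnectedComponent, 1 <
        ∑ C' : (G0 E).ConnectedComponent, (S ∩ suppC E C').card :=
      Finset.sum_lt_sum (fun C' _ => Finset.card_pos.mpr (hSne C'))
        ⟨C, Finset.mem_univ C, by omega⟩
    rw [sum_inter_card, hScard] at hlt
    simp only [Finset.sum_const, Finset.card_univ, smul_eq_mul, mul_one, hcF] at hlt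
    omega
  -- the unique representative statement
  have huniq : ∀ S : Finset (Fin k), (∀ C, (S ∩ suppC E C).card = 1) →
      ∀ comp : (lineGraph E Finset.univ).ConnectedComponent,
        ∃! i : Fin k, i ∈ S ∧
          (lineGraph E Finset.univ).connectedComponentMk ⟨i, Finset.mem_univ i⟩ = comp := by
    intro S hS comp
    obtain ⟨x, hx⟩ := comp.exists_rep
    set C := (G0 E).connectedComponentMk x.1 with hCdef
    obtain ⟨a, ha⟩ := Finset.card_eq_one.mp (hS C)
    have haS : a ∈ S ∩ suppC E C := ha ▸ Finset.mem_singleton_self a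
    have hxeq : (⟨x.1, Finset.mem_univ x.1⟩ : {i : Fin k // i ∈ Finset.univ}) = x :=
      Subtype.ext rfl
    refine ⟨a, ⟨(Finset.mem_inter.mp haS).1, ?_⟩, ?_⟩
    · have hmk : (G0 E).connectedComponentMk a = C :=
        (mem_suppC E).mp (Finset.mem_inter.mp haS).2
      have hreach : (G0 E).Reachable a x.1 := ConnectedComponent.exact hmk
      have := (g0_reachable_iff E).mp hreach
      rw [← hx, ← hxeq]
      exact ConnectedComponent.sound this
    · rintro j ⟨hjS, hjcomp⟩
      have hreach : (lineGraph E Finset.univ).Reachable ⟨j, Finset.mem_univ j⟩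
          ⟨x.1, Finset.mem_univ x.1⟩ := by
        apply ConnectedComponent.exact
        rw [hjcomp, ← hx, hxeq]
        rfl
      have hg0 : (G0 E).Reachable j x.1 := (g0_reachable_iff E).mpr hreach
      have hj : j ∈ S ∩ suppC E C := by
        rw [Finset.mem_inter, mem_suppC]
        exact ⟨hjS, ConnectedComponent.sound hg0⟩
      rw [ha, Finset.mem_singleton] at hj
      exact hj
  -- S₂ meets every component
  have hS2ne : ∀ C, (S₂ ∩ suppC E C).Nonempty := by
    intro C
    have hCcl : C ∈ cl := by rw [hcl, Finset.mem_toList]; exact Finset.mem_univ C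
    obtain ⟨v, hv1, hv2⟩ := forall2_mem hf2 C hCcl
    exact ⟨v, Finset.mem_inter.mpr ⟨hS2eq ▸ List.mem_toFinset.mpr hv1, hv2⟩⟩
  have hS1ne : ∀ C, (S₁ ∩ suppC E C).Nonempty := by
    intro C
    obtain ⟨v, hv⟩ := (hQF C).1
    exact ⟨v, by rwa [hS1eq]⟩
  -- disjointness
  have hdisjS : Disjoint S₁ S₂ := by
    rw [Finset.disjoint_left]
    intro a ha1 ha2
    have h1 : a ∈ (l₁.drop (k - c - c)).toFinset := by rw [← hglF, ← hS1eq]; exact ha1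
    have h2 : a ∈ T₁ := htf1 ▸ List.mem_toFinset.mpr
      (List.mem_of_mem_drop (List.mem_toFinset.mp h1))
    rw [hT₁, Finset.mem_sdiff] at h2
    exact h2.2 (hS2eq ▸ ha2)
  refine ⟨S₁, S₂, e, hdisjS, hS1card, hS2card,
    huniq S₁ (hcard1 S₁ hS1card hS1ne), huniq S₂ (hcard1 S₂ hS2card hS2ne), rfl, rfl, ?_⟩
  intro s hs
  rw [himg s, count_of_Q E (hQdrop s (by omega)), hc]
end
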